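/- For all integers k ≥ 2 and n ≥ 1, the number u_k(n) of unbordered words of length n over a k-letter alphabet satisfies u_k(n) ≥ k^n (1 - 1/k - 1/k^2). -/

import Mathlib

/-- `x` occurs in `w` at position `i`: `w[i..i+|x|-1] = x`. -/
def Occurs {α : Type*} (x w : List α) (i : ℕ) : Prop := x <+: w.drop i

/-- `w` contains two disjoint occurrences of `x`. -/
def TwoDisjointOccs {α : Type*} (x w : List α) : Prop :=
  ∃ i j : ℕ, Occurs x w i ∧ Occurs x w j ∧ i + x.length ≤ j

/-- `w` has period `q ≥ 1`: `w[i] = w[i+q]` whenever both are defined. -/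
def HasPeriod {α : Type*} (w : List α) (q : ℕ) : Prop :=
  1 ≤ q ∧ ∀ (i : ℕ) (h : i + q < w.length), w.get ⟨i, by omega⟩ = w.get ⟨i + q, h⟩

/-- The smallest period of `w`. -/
noncomputable def minPeriod {α : Type*} (w : List α) : ℕ := sInf {q | HasPeriod w q}

/-- A word is primitive if it is nonempty and not a proper power. -/
def Primitive {α : Type*} (w : List α) : Prop :=
  w ≠ [] ∧ ∀ (x : List α) (m : ℕ), 2 ≤ m → w ≠ (List.replicate m x).flatten

/-- `x` is a border of `w`. -/
def IsBorder {α : Type*} (x w : List α) : Prop :=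
  x ≠ [] ∧ x ≠ w ∧ x <+: w ∧ x <:+ w

def Unbordered {α : Type*} (w : List α) : Prop := ∀ x, ¬ IsBorder x w

/-- An overlap: a word of the form `a x a x a`. -/
def IsOverlap {α : Type*} (u : List α) : Prop :=
  ∃ (a : α) (x : List α), u = [a] ++ x ++ [a] ++ x ++ [a]

/-- A `t`-overlap: a word of the form `x x x'` where `x` is nonempty of length ≥ t
and `x'` is the prefix of `x` of length `t`. -/
def IsTOverlap {α : Type*} (t : ℕ) (u : List α) : Prop :=
  ∃ x : List α, x ≠ [] ∧ t ≤ x.length ∧ u = x ++ x ++ x.take t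

/-- `w` contains a split occurrence of a `t`-overlap: a factor `x y z` with `x z` a `t`-overlap. -/
def HasSplitTOverlap {α : Type*} (t : ℕ) (w : List α) : Prop :=
  ∃ x y z : List α, (x ++ y ++ z) <:+: w ∧ IsTOverlap t (x ++ z)

/-- `w` contains a reversed split occurrence of a `t`-overlap:
a factor `x y z` with `z x` a `t`-overlap. -/
def HasRevSplitTOverlap {α : Type*} (t : ℕ) (w : List α) : Prop :=
  ∃ x y z : List α, (x ++ y ++ z) <:+: w ∧ IsTOverlap t (z ++ x)

namespace UBaux

def WL (k L : ℕ) : Set (List (Fin k)) := {w | w.length = L}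

def WL_equiv (k L : ℕ) : ↥(WL k L) ≃ List.Vector (Fin k) L :=
  ⟨fun w => ⟨w.1, w.2⟩, fun v => ⟨v.1, v.2⟩, fun _ => rfl, fun _ => rfl⟩

lemma WL_ncard (k L : ℕ) : (WL k L).ncard = k ^ L := by
  rw [← Nat.card_coe_set_eq, Nat.card_congr (WL_equiv k L),
    Nat.card_eq_fintype_card, card_vector, Fintype.card_fin]

lemma WL_finite (k L : ℕ) : (WL k L).Finite :=
  Set.finite_coe_iff.mp (Finite.of_equiv _ (WL_equiv k L).symm)

lemma border_trans {α : Type*} {y x w : List α} (h1 : IsBorder y x) (h2 : IsBorder x w) :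
    IsBorder y w := by
  obtain ⟨hy0, hyx, hyp, hys⟩ := h1
  obtain ⟨hx0, hxw, hxp, hxs⟩ := h2
  have l1 : y.length < x.length := hyp.length_le.lt_of_ne (fun h => hyx (hyp.eq_of_length h))
  have l2 : x.length ≤ w.length := hxp.length_le
  refine ⟨hy0, fun h => ?_, hyp.trans hxp, hys.trans hxs⟩
  subst h; omega

lemma exists_unbordered_border {α : Type*} {w x : List α} (hx : IsBorder x w) :
    ∃ z, IsBorder z w ∧ Unbordered z := by
  suffices H : ∀ m (x : List α), x.length = m → IsBorder x w → ∃ z, IsBorder z w ∧ Unbordered z by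
    exact H _ x rfl hx
  intro m
  induction m using Nat.strong_induction_on with
  | _ m ih =>
    intro x hm hx
    by_cases hu : Unbordered x
    · exact ⟨x, hx, hu⟩
    · simp only [Unbordered, not_forall, not_not] at hu
      obtain ⟨y, hy⟩ := hu
      have hlt : y.length < x.length := hy.2.2.1.length_le.lt_of_ne
        (fun h => hy.2.1 (hy.2.2.1.eq_of_length h))
      exact ih y.length (hm ▸ hlt) y rfl (border_trans hy hx)

lemma unbordered_border_short {α : Type*} {x w : List α} (hb : IsBorder x w)
    (hu : Unbordered x) : 2 * x.length ≤ w.length := by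
  by_contra hlen
  push_neg at hlen
  obtain ⟨hx0, hxw, hxp, hxs⟩ := hb
  have hxl : x.length < w.length := hxp.length_le.lt_of_ne (fun h => hxw (hxp.eq_of_length h))
  have hxpos : 0 < x.length := List.length_pos_iff.mpr hx0
  set q := w.length - x.length with hq
  have hq1 : 1 ≤ q := by omega
  have hqx : q < x.length := by omega
  have hxtake : x = w.take x.length := List.prefix_iff_eq_take.mp hxp
  have hxdrop : x = w.drop q := List.suffix_iff_eq_drop.mp hxs
  have hds : x.drop q = x.take (x.length - q) := by
    conv_lhs => rw [hxtake]
    rw [List.drop_take, ← hxdrop]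
  apply hu (x.take (x.length - q))
  refine ⟨?_, ?_, List.take_prefix _ _, hds ▸ List.drop_suffix q x⟩
  · intro h
    have := congrArg List.length h
    simp [List.length_take] at this
    omega
  · intro h
    have := congrArg List.length h
    simp [List.length_take] at this
    omega

end UBaux
namespace UBaux

def C1 (k n : ℕ) : Set (List (Fin k)) := {w | w.length = n ∧ w[0]? = w[n-1]?}

def Cj (k n j : ℕ) : Set (List (Fin k)) :=
  {w | w.length = n ∧ w.take j <:+ w ∧ w[0]? ≠ w[n-1]?}

lemma cover {k n : ℕ} {w : List (Fin k)} (hw : w.length = n) (hb : ∃ x, IsBorder x w) :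
    w ∈ C1 k n ∨ ∃ j ∈ Finset.Icc 2 (n/2), w ∈ Cj k n j := by
  obtain ⟨x0, hx0⟩ := hb
  obtain ⟨x, hx, hu⟩ := exists_unbordered_border hx0
  obtain ⟨hne, hnw, hxp, hxs⟩ := hx
  have hjpos : 0 < x.length := List.length_pos_iff.mpr hne
  have h2j : 2 * x.length ≤ n := hw ▸ unbordered_border_short ⟨hne, hnw, hxp, hxs⟩ hu
  set j := x.length with hj
  have hxtake : x = w.take j := List.prefix_iff_eq_take.mp hxp
  have hxdrop : x = w.drop (n - j) := by
    have := List.suffix_iff_eq_drop.mp hxs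
    rwa [hw] at this
  have hw0 : x[0]? = w[0]? := by
    conv_lhs => rw [hxtake]
    rw [List.getElem?_take, if_pos hjpos]
  have hwlast : x[j-1]? = w[n-1]? := by
    conv_lhs => rw [hxdrop]
    rw [List.getElem?_drop]
    congr 1
    omega
  rcases eq_or_lt_of_le (Nat.succ_le_of_lt hjpos) with h1 | h2
  · -- j = 1
    left
    refine ⟨hw, ?_⟩
    rw [← hw0, ← hwlast]
    congr 1
    omega
  · -- 2 ≤ j
    right
    refine ⟨j, by simp [Finset.mem_Icc]; omega, hw, hxtake ▸ hxs, fun heq => ?_⟩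
    have hxx : x[0]? = x[j-1]? := by rw [hw0, hwlast, heq]
    have la : (x.take 1).length = 1 := by rw [List.length_take]; omega
    have lb : (x.drop (j-1)).length = 1 := by rw [List.length_drop]; omega
    obtain ⟨a, ha⟩ := List.length_eq_one_iff.mp la
    obtain ⟨b, hbb⟩ := List.length_eq_one_iff.mp lb
    have ha0 : x[0]? = some a := by
      have := congrArg (fun l => l[0]?) ha
      simpa [List.getElem?_take] using this
    have hb0 : x[j-1]? = some b := by
      have := congrArg (fun l => l[0]?) hbb
      simpa [List.getElem?_drop] using this
    have hab : a = b := by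
      rw [ha0, hb0] at hxx; exact Option.some_injective _ hxx
    apply hu (x.take 1)
    refine ⟨by simp [ha], fun h => ?_, List.take_prefix _ _, ?_⟩
    · have := congrArg List.length h
      rw [la] at this; omega
    · rw [ha, hab, ← hbb]
      exact List.drop_suffix _ _
  end UBaux
namespace UBaux

lemma C1_ncard {k n : ℕ} (hn : 2 ≤ n) : (C1 k n).ncard ≤ k ^ (n-1) := by
  rw [← WL_ncard k (n-1)]
  refine Set.ncard_le_ncard_of_injOn (fun w => w.tail) ?_ ?_ (WL_finite k (n-1))
  · intro w hw
    simp only [WL, Set.mem_setOf_eq, List.length_tail, hw.1]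
  · intro w1 h1 w2 h2 ht
    simp only at ht
    apply List.ext_getElem?
    intro i
    cases i with
    | zero =>
      rw [h1.2, h2.2]
      have e : n - 1 = (n-2) + 1 := by omega
      rw [e, ← List.getElem?_tail, ← List.getElem?_tail, ht]
    | succ i => rw [← List.getElem?_tail, ← List.getElem?_tail, ht]

lemma Cj_ncard {k n j : ℕ} (hk : 1 ≤ k) (h2 : 2 ≤ j) (hjn : 2 * j ≤ n) :
    (Cj k n j).ncard ≤ (k-1) * k ^ (n-j-1) := by
  classical
  set E : Set (List (Fin k)) := {v | v.length = n-j ∧ v[n-2*j]? = v[n-j-1]?} with hE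
  set D : Set (List (Fin k)) := {v | v.length = n-j ∧ v[n-2*j]? ≠ v[n-j-1]?} with hD
  have hEsub : E ⊆ WL k (n-j) := fun v hv => hv.1
  have hDsub : D ⊆ WL k (n-j) := fun v hv => hv.1
  have hDfin : D.Finite := (WL_finite k (n-j)).subset hDsub
  have step1 : (Cj k n j).ncard ≤ D.ncard := by
    refine Set.ncard_le_ncard_of_injOn (fun w => w.drop j) ?_ ?_ hDfin
    · rintro w ⟨hww, hsuf, hne⟩
      have hlt : (w.take j).length = j := by rw [List.length_take]; omega
      have htake_eq : w.take j = w.drop (n-j) := by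
        have := List.suffix_iff_eq_drop.mp hsuf
        rwa [hlt, hww] at this
      refine ⟨by rw [List.length_drop, hww], ?_⟩
      have e1 : (w.drop j)[n-2*j]? = w[n-j]? := by
        rw [List.getElem?_drop]; congr 1; omega
      have e2 : w[0]? = w[n-j]? := by
        have e3 : (w.take j)[0]? = w[0]? := by
          rw [List.getElem?_take, if_pos (by omega : 0 < j)]
        have e4 : (w.drop (n-j))[0]? = w[n-j]? := by
          simp [List.getElem?_drop]
        rw [← e3, htake_eq, e4]
      have e5 : (w.drop j)[n-j-1]? = w[n-1]? := by
        rw [List.getElem?_drop]; congr 1; omega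
      rw [e1, e5, ← e2]
      exact hne
    · rintro w1 h1 w2 h2 hd
      simp only at hd
      have key : ∀ w : List (Fin k), w ∈ Cj k n j → w.take j = (w.drop j).drop (n-2*j) := by
        rintro w ⟨hww, hsuf, -⟩
        have hlt : (w.take j).length = j := by rw [List.length_take]; omega
        have htake_eq : w.take j = w.drop (n-j) := by
          have := List.suffix_iff_eq_drop.mp hsuf
          rwa [hlt, hww] at this
        rw [htake_eq, List.drop_drop]
        congr 1
        omega
      calc w1 = w1.take j ++ w1.drop j := (List.take_append_drop j w1).symm
        _ = w2.take j ++ w2.drop j := by rw [key w1 h1, key w2 h2, hd]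
        _ = w2 := List.take_append_drop j w2
  have step3 : k ^ (n-j-1) ≤ E.ncard := by
    rw [← WL_ncard k (n-j-1)]
    have hd0 : Fin k := ⟨0, by omega⟩
    refine Set.ncard_le_ncard_of_injOn (fun v => v ++ [(v[n-2*j]?).getD hd0]) ?_ ?_
      ((WL_finite k (n-j)).subset hEsub)
    · intro v hv
      have hvl : v.length = n-j-1 := hv
      have hplt : n-2*j < v.length := by omega
      have e1 : (v ++ [(v[n-2*j]?).getD hd0])[n-2*j]? = v[n-2*j]? := by
        rw [List.getElem?_append, if_pos hplt]
      have e2 : (v ++ [(v[n-2*j]?).getD hd0])[n-j-1]? = some ((v[n-2*j]?).getD hd0) := by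
        rw [List.getElem?_append, if_neg (by omega)]
        have : n-j-1 - v.length = 0 := by omega
        rw [this]
        rfl
      refine ⟨by simp [hvl]; omega, ?_⟩
      rw [e1, e2, List.getElem?_eq_getElem hplt]
      rfl
    · intro v1 _ v2 _ h
      simpa using congrArg List.dropLast h
  have step2 : D.ncard ≤ k^(n-j) - E.ncard := by
    have hDeq : D = WL k (n-j) \ E := by
      ext v
      simp only [hD, hE, WL, Set.mem_setOf_eq, Set.mem_diff]
      tauto
    rw [hDeq, Set.ncard_diff hEsub ((WL_finite k (n-j)).subset hEsub), WL_ncard]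
  have hpow : k ^ (n-j) = k * k ^ (n-j-1) := by
    rw [← pow_succ']
    congr 1
    omega
  calc (Cj k n j).ncard ≤ k^(n-j) - E.ncard := step1.trans step2
    _ ≤ k^(n-j) - k^(n-j-1) := Nat.sub_le_sub_left step3 _
    _ = (k-1) * k^(n-j-1) := by rw [hpow, Nat.sub_one_mul]

end UBaux
namespace UBaux

lemma geo (k' t : ℕ) : k' * (∑ i ∈ Finset.range t, (k'+1)^i) + 1 = (k'+1)^t := by
  induction t with
  | zero => simp
  | succ t ih =>
    rw [Finset.sum_range_succ]
    calc k' * (∑ i ∈ Finset.range t, (k'+1)^i + (k'+1)^t) + 1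
        = (k' * ∑ i ∈ Finset.range t, (k'+1)^i + 1) + k'*(k'+1)^t := by ring
      _ = (k'+1)^t + k'*(k'+1)^t := by rw [ih]
      _ = (k'+1)^(t+1) := by ring

lemma sum_bound {k n m : ℕ} (hk : 1 ≤ k) (hm : 2 * m ≤ n) :
    ∑ j ∈ Finset.Icc 2 m, (k-1) * k^(n-j-1) ≤ k^(n-2) := by
  classical
  have h1 : ∑ j ∈ Finset.Icc 2 m, (k-1) * k^(n-j-1)
      = (k-1) * ∑ j ∈ Finset.Icc 2 m, k^(n-j-1) := by
    rw [Finset.mul_sum]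
  have hinj : ∀ x ∈ Finset.Icc 2 m, ∀ y ∈ Finset.Icc 2 m,
      (fun j => n - j - 1) x = (fun j => n - j - 1) y → x = y := by
    intro x hx y hy h
    simp only [Finset.mem_Icc] at hx hy
    simp only at h
    omega
  have h2 : ∑ j ∈ Finset.Icc 2 m, k^(n-j-1)
      = ∑ i ∈ Finset.image (fun j => n - j - 1) (Finset.Icc 2 m), k^i :=
    (Finset.sum_image hinj).symm
  have h3 : Finset.image (fun j => n - j - 1) (Finset.Icc 2 m) ⊆ Finset.range (n-2) := by
    intro i hi
    simp only [Finset.mem_image, Finset.mem_Icc] at hi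
    obtain ⟨j, hj, rfl⟩ := hi
    simp only [Finset.mem_range]
    omega
  obtain ⟨k', rfl⟩ : ∃ k', k = k' + 1 := ⟨k - 1, by omega⟩
  calc ∑ j ∈ Finset.Icc 2 m, (k'+1-1) * (k'+1)^(n-j-1)
      = (k'+1-1) * ∑ i ∈ Finset.image (fun j => n - j - 1) (Finset.Icc 2 m), (k'+1)^i := by
        rw [h1, h2]
    _ ≤ k' * ∑ i ∈ Finset.range (n-2), (k'+1)^i := by
        simp only [Nat.add_sub_cancel]
        exact Nat.mul_le_mul_left _ (Finset.sum_le_sum_of_subset h3)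
    _ ≤ (k'+1)^(n-2) := by have := geo k' (n-2); omega

lemma ncard_biUnion_le {α ι : Type*} (s : Finset ι) (f : ι → Set α) :
    (⋃ j ∈ s, f j).ncard ≤ ∑ j ∈ s, (f j).ncard := by
  classical
  induction s using Finset.induction with
  | empty => simp
  | insert a s hx ih =>
    rw [Finset.sum_insert hx]
    calc (⋃ j ∈ insert a s, f j).ncard = (f a ∪ ⋃ j ∈ s, f j).ncard := by
          rw [Finset.set_biUnion_insert]
      _ ≤ (f a).ncard + (⋃ j ∈ s, f j).ncard := Set.ncard_union_le _ _
      _ ≤ (f a).ncard + ∑ j ∈ s, (f j).ncard := by omega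

lemma main_count {k n : ℕ} (hk : 2 ≤ k) (hn : 2 ≤ n) :
    k ^ n ≤ ({w : List (Fin k) | w.length = n ∧ Unbordered w}).ncard
      + (k^(n-1) + k^(n-2)) := by
  classical
  set S : Set (List (Fin k)) := {w | w.length = n ∧ Unbordered w} with hS
  set B : Set (List (Fin k)) := {w | w.length = n ∧ ¬ Unbordered w} with hB
  have hSsub : S ⊆ WL k n := fun w hw => hw.1
  have hBsub : B ⊆ WL k n := fun w hw => hw.1
  have hSeq : S = WL k n \ B := by
    ext w
    simp only [hS, hB, WL, Set.mem_setOf_eq, Set.mem_diff]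
    tauto
  have hBcover : B ⊆ C1 k n ∪ ⋃ j ∈ Finset.Icc 2 (n/2), Cj k n j := by
    rintro w ⟨hw, hnu⟩
    have hb : ∃ x, IsBorder x w := by
      simp only [Unbordered, not_forall, not_not] at hnu
      exact hnu
    rcases cover hw hb with h | ⟨j, hj, hmem⟩
    · exact Or.inl h
    · exact Or.inr (Set.mem_biUnion hj hmem)
  have hBcard : B.ncard ≤ k^(n-1) + k^(n-2) := by
    calc B.ncard ≤ (C1 k n ∪ ⋃ j ∈ Finset.Icc 2 (n/2), Cj k n j).ncard := by
          refine Set.ncard_le_ncard hBcover (Set.Finite.union ?_ ?_)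
          · exact (WL_finite k n).subset (fun w hw => hw.1)
          · apply Set.Finite.biUnion (Finset.Icc 2 (n/2)).finite_toSet
            intro j _
            exact (WL_finite k n).subset (fun w hw => hw.1)
      _ ≤ (C1 k n).ncard + (⋃ j ∈ Finset.Icc 2 (n/2), Cj k n j).ncard :=
          Set.ncard_union_le _ _
      _ ≤ k^(n-1) + ∑ j ∈ Finset.Icc 2 (n/2), (Cj k n j).ncard := by
          have := ncard_biUnion_le (Finset.Icc 2 (n/2)) (fun j => Cj k n j)
          have := C1_ncard (k := k) hn
          omega
      _ ≤ k^(n-1) + ∑ j ∈ Finset.Icc 2 (n/2), (k-1) * k^(n-j-1) := by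
          have : ∑ j ∈ Finset.Icc 2 (n/2), (Cj k n j).ncard
              ≤ ∑ j ∈ Finset.Icc 2 (n/2), (k-1) * k^(n-j-1) := by
            apply Finset.sum_le_sum
            intro j hj
            simp only [Finset.mem_Icc] at hj
            exact Cj_ncard (by omega) hj.1 (by omega)
          omega
      _ ≤ k^(n-1) + k^(n-2) := by
          have := sum_bound (n := n) (m := n/2) (k := k) (by omega) (by omega)
          omega
  have hScard : S.ncard = k^n - B.ncard := by
    rw [hSeq, Set.ncard_diff hBsub ((WL_finite k n).subset hBsub), WL_ncard]
  have hBle : B.ncard ≤ k^n := by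
    rw [← WL_ncard k n]
    exact Set.ncard_le_ncard hBsub (WL_finite k n)
  omega

end UBaux

theorem unbordered_count_lower_bound (k n : ℕ) (hk : 2 ≤ k) (hn : 1 ≤ n) :
    (k : ℝ) ^ n * (1 - 1 / (k : ℝ) - 1 / (k : ℝ) ^ 2)
      ≤ (({w : List (Fin k) | w.length = n ∧ Unbordered w}).ncard : ℝ) := by
  have hk0 : (0:ℝ) < (k:ℝ) := by
    have : (0:ℕ) < k := by omega
    exact_mod_cast this
  rcases eq_or_lt_of_le hn with h1 | h2
  · -- n = 1
    have hset : {w : List (Fin k) | w.length = n ∧ Unbordered w} = UBaux.WL k n := by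
      ext w
      simp only [UBaux.WL, Set.mem_setOf_eq, and_iff_left_iff_imp]
      intro hw x hx
      obtain ⟨hx0, hxw, hxp, _⟩ := hx
      have hle := hxp.length_le
      have h0 : 0 < x.length := List.length_pos_iff.mpr hx0
      have hlen : x.length = w.length := by omega
      exact hxw (hxp.eq_of_length hlen)
    rw [hset, UBaux.WL_ncard, ← h1]
    have hik : 0 < 1/(k:ℝ) := by positivity
    have hik2 : 0 < 1/(k:ℝ)^2 := by positivity
    have : (k:ℝ)^1 * (1 - 1/(k:ℝ) - 1/(k:ℝ)^2) ≤ (k:ℝ)^1 := by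
      nlinarith
    calc (k:ℝ)^1 * (1 - 1/(k:ℝ) - 1/(k:ℝ)^2) ≤ (k:ℝ)^1 := this
      _ = ((k^1 : ℕ) : ℝ) := by push_cast; ring
  · have hn2 : 2 ≤ n := h2
    have hc := UBaux.main_count hk hn2
    have hcast : ((k:ℝ))^n
        ≤ (({w : List (Fin k) | w.length = n ∧ Unbordered w}).ncard : ℝ)
          + ((k:ℝ)^(n-1) + (k:ℝ)^(n-2)) := by exact_mod_cast hc
    have e1 : (k:ℝ)^(n-1) = (k:ℝ)^n * ((k:ℝ)^1)⁻¹ := pow_sub₀ _ (ne_of_gt hk0) (by omega)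
    have e2 : (k:ℝ)^(n-2) = (k:ℝ)^n * ((k:ℝ)^2)⁻¹ := pow_sub₀ _ (ne_of_gt hk0) (by omega)
    have key : (k:ℝ)^n * (1 - 1/(k:ℝ) - 1/(k:ℝ)^2)
        = (k:ℝ)^n - (k:ℝ)^(n-1) - (k:ℝ)^(n-2) := by
      rw [e1, e2]
      field_simp
    rw [key]
    linarith
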